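/- Let G be a finite simple graph with nonempty vertex set, and suppose that G is not globally rigid in ℝ. Then there exist k ≥ 2 and a partition of the vertex set of G into nonempty sets S_1, …, S_k such that: (i) Σ_{i=1}^k |E(G[S_i])| ≥ |E(G)|/2; and (ii) for every vertex v ∈ S_i and every j ≠ i, v has at most one neighbour in S_j. -/

import Mathlib

/-- A graph is globally rigid in ℝ. -/
def GloballyRigid {V : Type*} (G : SimpleGraph V) : Prop :=
  ∀ f g : V → ℝ, Function.Injective f → Function.Injective g →
    (∀ x y, G.Adj x y → |f x - f y| = |g x - g y|) →
    ∀ x y, |f x - f y| = |g x - g y|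

private lemma dart_nat_card {V : Type*} [Fintype V] (G : SimpleGraph V) :
    Nat.card G.Dart = 2 * Nat.card G.edgeSet := by
  classical
  rw [Nat.card_eq_fintype_card, Nat.card_eq_fintype_card, G.dart_card_eq_twice_card_edges,
    SimpleGraph.edgeFinset, Set.toFinset_card]

/-- Construct the partition given by the fibers of `φ`. -/
private lemma aux_part {V : Type*} [Fintype V] (G : SimpleGraph V) (φ ψ : V → ℝ)
    (hinj : ∀ x y, φ x = φ y → ψ x = ψ y → x = y)
    (a b : V) (hab : φ a ≠ φ b)
    (hcov : ∀ x y, G.Adj x y → φ x ≠ φ y → ψ x = ψ y) :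
    ∃ (k : ℕ), 2 ≤ k ∧ ∃ P : V → Fin k,
      Function.Surjective P ∧
      Nat.card {d : G.Dart // φ d.toProd.1 = φ d.toProd.2}
        ≤ ∑ i : Fin k, Nat.card (SimpleGraph.induce (P ⁻¹' {i}) G).Dart ∧
      (∀ (v : V) (j : Fin k), j ≠ P v →
        Nat.card {w : V // P w = j ∧ G.Adj v w} ≤ 1) := by
  classical
  set s : Finset ℝ := Finset.image φ Finset.univ with hs
  have hmem : ∀ v, φ v ∈ s := fun v => Finset.mem_image_of_mem φ (Finset.mem_univ v)
  set e := s.equivFin with he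
  set P : V → Fin s.card := fun v => e ⟨φ v, hmem v⟩ with hPdef
  have hP : ∀ v w, P v = P w ↔ φ v = φ w := by
    intro v w
    constructor
    · intro h
      exact congrArg Subtype.val (e.injective h)
    · intro h
      exact congrArg e (Subtype.ext h)
  refine ⟨s.card, ?_, P, ?_, ?_, ?_⟩
  · have : 1 < s.card := Finset.one_lt_card.mpr ⟨φ a, hmem a, φ b, hmem b, hab⟩
    omega
  · intro i
    obtain ⟨v, -, hv⟩ := Finset.mem_image.mp (e.symm i).2
    refine ⟨v, ?_⟩
    have h1 : (⟨φ v, hmem v⟩ : {x // x ∈ s}) = e.symm i := Subtype.ext hv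
    show e ⟨φ v, hmem v⟩ = i
    rw [h1, Equiv.apply_symm_apply]
  · -- counting
    set T := {d : G.Dart // φ d.toProd.1 = φ d.toProd.2} with hT
    have h1 : Nat.card T = ∑ i : Fin s.card, Nat.card {t : T // P t.val.toProd.1 = i} := by
      rw [← Nat.card_congr (Equiv.sigmaFiberEquiv (fun t : T => P t.val.toProd.1))]
      rw [Nat.card_eq_fintype_card, Fintype.card_sigma]
      simp [Nat.card_eq_fintype_card]
    rw [h1]
    refine Finset.sum_le_sum fun i _ => ?_
    have key : ∀ t : {t : T // P t.val.toProd.1 = i},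
        t.val.val.toProd.1 ∈ P ⁻¹' {i} ∧ t.val.val.toProd.2 ∈ P ⁻¹' {i} := by
      intro t
      have h1 : P t.val.val.toProd.1 = i := t.2
      have h2 : P t.val.val.toProd.2 = P t.val.val.toProd.1 := (hP _ _).mpr t.val.2.symm
      exact ⟨h1, h2.trans h1⟩
    refine Nat.card_le_card_of_injective
      (fun t => ⟨(⟨t.val.val.toProd.1, (key t).1⟩, ⟨t.val.val.toProd.2, (key t).2⟩),
        t.val.val.adj⟩) ?_
    intro t t' h
    simp only [SimpleGraph.Dart.mk.injEq, Prod.mk.injEq, Subtype.mk.injEq] at h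
    exact Subtype.ext (Subtype.ext (SimpleGraph.Dart.ext _ _ (Prod.ext
      (congrArg (fun d => (d.toProd.1 : V)) h) (congrArg (fun d => (d.toProd.2 : V)) h))))
  · intro v j hj
    rw [Finite.card_le_one_iff_subsingleton]
    constructor
    rintro ⟨w1, hw1, aw1⟩ ⟨w2, hw2, aw2⟩
    have hne1 : φ v ≠ φ w1 := by
      intro hE
      exact hj (hw1.symm.trans ((hP w1 v).mpr hE.symm))
    have hne2 : φ v ≠ φ w2 := by
      intro hE
      exact hj (hw2.symm.trans ((hP w2 v).mpr hE.symm))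
    have hφ : φ w1 = φ w2 := (hP w1 w2).mp (hw1.trans hw2.symm)
    have hψ : ψ w1 = ψ w2 := (hcov v w1 aw1 hne1).symm.trans (hcov v w2 aw2 hne2)
    exact Subtype.ext (hinj w1 w2 hφ hψ)

/-- If a finite graph with nonempty vertex set is not globally rigid in ℝ, then its vertex set
has a partition into `k ≥ 2` nonempty blocks (the fibers of a surjection onto `Fin k`) such
that (i) at least half of the edges lie inside blocks, and (ii) every vertex has at most one
neighbour in each block other than its own. -/
theorem stmt16 {V : Type*} [Fintype V] [Nonempty V] (G : SimpleGraph V)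
    (h : ¬ GloballyRigid G) :
    ∃ (k : ℕ), 2 ≤ k ∧ ∃ P : V → Fin k,
      Function.Surjective P ∧
      ((Nat.card G.edgeSet : ℝ) / 2 ≤
        ∑ i : Fin k, (Nat.card (SimpleGraph.induce (P ⁻¹' {i}) G).edgeSet : ℝ)) ∧
      (∀ (v : V) (j : Fin k), j ≠ P v →
        Nat.card {w : V // P w = j ∧ G.Adj v w} ≤ 1) := by
  classical
  rw [GloballyRigid] at h
  push_neg at h
  obtain ⟨f, g, hf, hg, hedge, x, y, hxy⟩ := h
  set φ : V → ℝ := fun v => f v - g v with hφdef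
  set ψ : V → ℝ := fun v => f v + g v with hψdef
  have hinjφ : ∀ x y, φ x = φ y → ψ x = ψ y → x = y := by
    intro u w h1 h2
    apply hf
    simp only [hφdef, hψdef] at h1 h2
    linarith
  have hinjψ : ∀ x y, ψ x = ψ y → φ x = φ y → x = y := fun u w h1 h2 => hinjφ u w h2 h1
  have hcov' : ∀ u w, G.Adj u w → φ u = φ w ∨ ψ u = ψ w := by
    intro u w huw
    have := hedge u w huw
    rcases abs_eq_abs.mp this with h1 | h1
    · left; simp only [hφdef]; linarith
    · right; simp only [hψdef]; linarith
  have hφxy : φ x ≠ φ y := by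
    intro hE
    apply hxy
    simp only [hφdef] at hE
    rw [show f x - f y = g x - g y by linarith]
  have hψxy : ψ x ≠ ψ y := by
    intro hE
    apply hxy
    simp only [hψdef] at hE
    rw [show f x - f y = -(g x - g y) by linarith, abs_neg]
  obtain ⟨k1, hk1, P1, hs1, hc1, hii1⟩ :=
    aux_part G φ ψ hinjφ x y hφxy (fun u w huw hne => (hcov' u w huw).resolve_left hne)
  obtain ⟨k2, hk2, P2, hs2, hc2, hii2⟩ :=
    aux_part G ψ φ hinjψ x y hψxy
      (fun u w huw hne => (hcov' u w huw).resolve_right hne)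
  -- split all darts into φ-internal and ψ-internal
  have hsplit : Nat.card G.Dart ≤
      Nat.card {d : G.Dart // φ d.toProd.1 = φ d.toProd.2} +
      Nat.card {d : G.Dart // ψ d.toProd.1 = ψ d.toProd.2} := by
    rw [← Nat.card_sum]
    refine Nat.card_le_card_of_injective
      (fun d => if h : φ d.toProd.1 = φ d.toProd.2 then Sum.inl ⟨d, h⟩
        else Sum.inr ⟨d, (hcov' _ _ d.adj).resolve_left h⟩) ?_
    intro d d' h
    dsimp only at h
    split_ifs at h <;> simpa using h
  have ed1 : ∀ i : Fin k1, Nat.card (SimpleGraph.induce (P1 ⁻¹' {i}) G).Dart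
      = 2 * Nat.card (SimpleGraph.induce (P1 ⁻¹' {i}) G).edgeSet :=
    fun i => dart_nat_card _
  have ed2 : ∀ i : Fin k2, Nat.card (SimpleGraph.induce (P2 ⁻¹' {i}) G).Dart
      = 2 * Nat.card (SimpleGraph.induce (P2 ⁻¹' {i}) G).edgeSet :=
    fun i => dart_nat_card _
  set S1 := ∑ i : Fin k1, Nat.card (SimpleGraph.induce (P1 ⁻¹' {i}) G).edgeSet with hS1
  set S2 := ∑ i : Fin k2, Nat.card (SimpleGraph.induce (P2 ⁻¹' {i}) G).edgeSet with hS2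
  have htot : Nat.card G.edgeSet ≤ S1 + S2 := by
    have h1 : 2 * Nat.card G.edgeSet ≤ 2 * S1 + 2 * S2 := by
      calc 2 * Nat.card G.edgeSet = Nat.card G.Dart := (dart_nat_card G).symm
        _ ≤ _ + _ := hsplit
        _ ≤ (∑ i : Fin k1, Nat.card (SimpleGraph.induce (P1 ⁻¹' {i}) G).Dart)
            + (∑ i : Fin k2, Nat.card (SimpleGraph.induce (P2 ⁻¹' {i}) G).Dart) :=
          Nat.add_le_add hc1 hc2
        _ = 2 * S1 + 2 * S2 := by
          rw [hS1, hS2, Finset.mul_sum, Finset.mul_sum]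
          exact congrArg₂ (· + ·) (Finset.sum_congr rfl fun i _ => ed1 i)
            (Finset.sum_congr rfl fun i _ => ed2 i)
    omega
  by_cases hch : Nat.card G.edgeSet ≤ 2 * S1
  · refine ⟨k1, hk1, P1, hs1, ?_, hii1⟩
    rw [div_le_iff₀ (by norm_num : (0:ℝ) < 2)]
    have : Nat.card G.edgeSet ≤ S1 * 2 := by omega
    exact_mod_cast this
  · refine ⟨k2, hk2, P2, hs2, ?_, hii2⟩
    rw [div_le_iff₀ (by norm_num : (0:ℝ) < 2)]
    have : Nat.card G.edgeSet ≤ S2 * 2 := by omega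
    exact_mod_cast this
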